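/- Let 𝔽_q be a finite field with q elements (q a prime power ≥ 2) and K := 𝔽_q(θ) the rational function field. Define D_0 := 1 and, for i ≥ 1, D_i := ∏_{j=1}^{i} (θ^{q^j} − θ)^{q^{i−j}} ∈ K. Let exp_C ∈ K[[z]] be the power series whose coefficient of z^m equals D_i^{−1} if m = q^i for some i ≥ 0 and 0 otherwise (the Carlitz exponential series). Then PowerSeries.rescale θ (exp_C) − θ·exp_C = (exp_C)^q, i.e. exp_C(θz) = θ·exp_C(z) + exp_C(z)^q; this is the identity d_C(exp_C) = exp_C. -/

import Mathlib

open scoped Classical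

section frob

variable {R : Type*} [CommRing R] (p : ℕ) [hp : Fact p.Prime] [CharP R p]

lemma coeff_pow_expChar (f : PowerSeries R) (n : ℕ) :
    PowerSeries.coeff n (f ^ p) =
      if p ∣ n then (PowerSeries.coeff (n / p) f) ^ p else 0 := by
  haveI : ExpChar R p := ExpChar.prime hp.out
  set g : Polynomial R := PowerSeries.trunc (n + 1) f with hg
  have h2 : PowerSeries.coeff n (f ^ p) = (g ^ p).coeff n := by
    have := PowerSeries.trunc_trunc_pow f (n + 1) p
    calc PowerSeries.coeff n (f ^ p)
        = (PowerSeries.trunc (n+1) (f ^ p)).coeff n := by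
          rw [PowerSeries.coeff_trunc, if_pos (Nat.lt_succ_self n)]
      _ = (PowerSeries.trunc (n+1) ((g : PowerSeries R) ^ p)).coeff n := by rw [this]
      _ = PowerSeries.coeff n ((g : PowerSeries R) ^ p) := by
          rw [PowerSeries.coeff_trunc, if_pos (Nat.lt_succ_self n)]
      _ = PowerSeries.coeff n ((g ^ p : Polynomial R) : PowerSeries R) := by
          rw [Polynomial.coe_pow]
      _ = (g ^ p).coeff n := Polynomial.coeff_coe _ _
  rw [h2, ← Polynomial.map_frobenius_expand (p := p) g, Polynomial.coeff_map,
    Polynomial.coeff_expand hp.out.pos]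
  have hdivlt : n / p < n + 1 := Nat.lt_succ_of_le (Nat.div_le_self n p)
  have hgc : g.coeff (n / p) = PowerSeries.coeff (n / p) f := by
    rw [hg, PowerSeries.coeff_trunc, if_pos hdivlt]
  split_ifs with h
  · rw [hgc]; rfl
  · exact map_zero _

lemma coeff_pow_expChar_pow (e : ℕ) (f : PowerSeries R) (n : ℕ) :
    PowerSeries.coeff n (f ^ p ^ e) =
      if p ^ e ∣ n then (PowerSeries.coeff (n / p ^ e) f) ^ p ^ e else 0 := by
  induction e generalizing n with
  | zero => simp
  | succ e ih =>
    have : f ^ p ^ (e + 1) = (f ^ p ^ e) ^ p := by rw [← pow_mul, ← pow_succ]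
    rw [this, coeff_pow_expChar p, ih]
    by_cases h1 : p ∣ n
    · rw [if_pos h1]
      have key : p ^ e ∣ n / p ↔ p ^ (e + 1) ∣ n := by
        rw [Nat.dvd_div_iff_mul_dvd h1, ← pow_succ']
      by_cases h2 : p ^ (e + 1) ∣ n
      · rw [if_pos (key.mpr h2), if_pos h2, Nat.div_div_eq_div_mul, ← pow_succ', ← pow_mul,
          ← pow_succ]
      · rw [if_neg (fun hh => h2 (key.mp hh)), if_neg h2, zero_pow hp.out.ne_zero]
    · rw [if_neg h1, if_neg (fun hh => h1 (dvd_trans (dvd_pow_self p (Nat.succ_ne_zero e)) hh))]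

end frob

/-- `D_i = ∏_{j=1}^{i} (θ^{q^j} - θ)^{q^{i-j}}` in `K = 𝔽_q(θ)` (with `D_0 = 1`). -/
noncomputable def carlitzD (Fq : Type*) [Field Fq] (q i : ℕ) : RatFunc Fq :=
  ∏ j ∈ Finset.Icc 1 i, ((RatFunc.X : RatFunc Fq) ^ q ^ j - RatFunc.X) ^ q ^ (i - j)

/-- The Carlitz exponential series `exp_C = ∑_{i ≥ 0} D_i⁻¹ z^{q^i}` over `K = 𝔽_q(θ)`:
the coefficient of `z^m` is `D_i⁻¹` if `m = q^i` for some `i ≥ 0`, and `0` otherwise. -/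
noncomputable def carlitzExp (Fq : Type*) [Field Fq] (q : ℕ) :
    PowerSeries (RatFunc Fq) :=
  PowerSeries.mk fun m =>
    if h : ∃ i : ℕ, m = q ^ i then (carlitzD Fq q h.choose)⁻¹ else 0

section lemmas

variable {Fq : Type*} [Field Fq] {q : ℕ}

lemma X_pow_sub_X_ne_zero {n : ℕ} (hn : 2 ≤ n) :
    ((RatFunc.X : RatFunc Fq) ^ n - RatFunc.X) ≠ 0 := by
  rw [sub_ne_zero]
  intro h
  rw [← RatFunc.algebraMap_X (K := Fq), ← map_pow] at h
  have := RatFunc.algebraMap_injective Fq h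
  have hdeg := congrArg Polynomial.natDegree this
  rw [Polynomial.natDegree_X_pow, Polynomial.natDegree_X] at hdeg
  omega

lemma carlitzD_ne_zero (hq2 : 2 ≤ q) (i : ℕ) : carlitzD Fq q i ≠ 0 := by
  refine Finset.prod_ne_zero_iff.2 fun j hj => pow_ne_zero _ ?_
  have hj1 : 1 ≤ j := (Finset.mem_Icc.1 hj).1
  exact X_pow_sub_X_ne_zero (le_trans hq2 (Nat.le_self_pow (by omega) q))

lemma carlitzD_succ (j : ℕ) :
    carlitzD Fq q (j + 1) =
      ((RatFunc.X : RatFunc Fq) ^ q ^ (j + 1) - RatFunc.X) * (carlitzD Fq q j) ^ q := by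
  rw [carlitzD, Finset.prod_Icc_succ_top (Nat.le_add_left 1 j)]
  rw [Nat.sub_self, pow_zero, pow_one, mul_comm]
  congr 1
  rw [carlitzD, ← Finset.prod_pow]
  refine Finset.prod_congr rfl fun k hk => ?_
  have hk2 : k ≤ j := (Finset.mem_Icc.1 hk).2
  have hjk : j + 1 - k = (j - k) + 1 := by omega
  rw [← pow_mul, ← pow_succ, hjk]

lemma coeff_carlitzExp_pow (hq2 : 2 ≤ q) (i : ℕ) :
    PowerSeries.coeff (q ^ i) (carlitzExp Fq q) = (carlitzD Fq q i)⁻¹ := by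
  rw [carlitzExp, PowerSeries.coeff_mk]
  have h : ∃ j : ℕ, q ^ i = q ^ j := ⟨i, rfl⟩
  rw [dif_pos h]
  rw [Nat.pow_right_injective hq2 h.choose_spec.symm]

lemma coeff_carlitzExp_of_not (m : ℕ) (h : ¬∃ i : ℕ, m = q ^ i) :
    PowerSeries.coeff m (carlitzExp Fq q) = 0 := by
  rw [carlitzExp, PowerSeries.coeff_mk, dif_neg h]

end lemmas

/-- The Carlitz exponential series satisfies
`exp_C(θ z) - θ·exp_C(z) = exp_C(z)^q`, i.e. `d_C(exp_C) = exp_C`. -/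
theorem carlitzExp_difference_equation (Fq : Type*) [Field Fq] [Fintype Fq]
    (q : ℕ) (hq : Fintype.card Fq = q) (hq2 : 2 ≤ q) :
    PowerSeries.rescale (RatFunc.X : RatFunc Fq) (carlitzExp Fq q)
        - PowerSeries.C (RatFunc.X : RatFunc Fq) * carlitzExp Fq q
      = carlitzExp Fq q ^ q := by
  classical
  set p := ringChar Fq with hpdef
  haveI : CharP Fq p := ringChar.charP Fq
  obtain ⟨e, hp, hcard⟩ := FiniteField.card Fq p
  haveI : Fact p.Prime := ⟨hp⟩
  haveI : CharP (RatFunc Fq) p := charP_of_injective_algebraMap' Fq p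
  have hqe : q = p ^ (e : ℕ) := by rw [← hq, hcard]
  set f := carlitzExp Fq q with hf
  ext m
  rw [map_sub, PowerSeries.coeff_rescale, PowerSeries.coeff_C_mul, hqe,
    coeff_pow_expChar_pow p e f m, ← hqe]
  by_cases hm : ∃ i : ℕ, m = q ^ i
  · obtain ⟨i, rfl⟩ := hm
    cases i with
    | zero =>
      rw [pow_zero]
      have hq1 : ¬ q ∣ 1 := fun h => by have := Nat.le_of_dvd one_pos h; omega
      rw [if_neg hq1]
      simp
    | succ j =>
      have hdvd : q ∣ q ^ (j + 1) := dvd_pow_self q (Nat.succ_ne_zero j)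
      have hdiv : q ^ (j + 1) / q = q ^ j := by
        rw [pow_succ, Nat.mul_div_cancel _ (Nat.lt_of_lt_of_le Nat.zero_lt_two hq2)]
      rw [if_pos hdvd, hdiv, coeff_carlitzExp_pow hq2, coeff_carlitzExp_pow hq2,
        ← sub_mul, carlitzD_succ, mul_inv, ← mul_assoc,
        mul_inv_cancel₀ (X_pow_sub_X_ne_zero (le_trans hq2 (Nat.le_self_pow (Nat.succ_ne_zero j) q))),
        one_mul, inv_pow]
  · rw [coeff_carlitzExp_of_not m hm, mul_zero, mul_zero, sub_zero]
    by_cases hdvd : q ∣ m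
    · rw [if_pos hdvd]
      have hnot : ¬∃ i : ℕ, m / q = q ^ i := by
        rintro ⟨i, hi⟩
        exact hm ⟨i + 1, by rw [pow_succ, ← hi, Nat.div_mul_cancel hdvd]⟩
      rw [coeff_carlitzExp_of_not _ hnot, zero_pow (by omega : q ≠ 0)]
    · rw [if_neg hdvd]
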